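/- Every n-dimensional centrally symmetric convex body K can be written as a union of n+1 subsets, each of diameter strictly smaller than the diameter of K. -/

import Mathlib

set_option maxHeartbeats 1000000

open RealInnerProductSpace

/-- Riesling: every n-dimensional centrally symmetric convex body can be written as
a union of n+1 subsets, each of diameter strictly smaller than the diameter of the
body. -/
theorem centrally_symmetric_borsuk (n : ℕ) (hn : 0 < n)
    (K : Set (EuclideanSpace ℝ (Fin n)))
    (hKc : IsCompact K) (hKconv : Convex ℝ K) (hKint : (interior K).Nonempty)
    (hsymm : ∃ c : EuclideanSpace ℝ (Fin n), ∀ x ∈ K, (2 : ℝ) • c - x ∈ K) :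
    ∃ X : Fin (n + 1) → Set (EuclideanSpace ℝ (Fin n)),
      K = ⋃ i, X i ∧ ∀ i, Metric.diam (X i) < Metric.diam K := by
  classical
  obtain ⟨c, hc⟩ := hsymm
  obtain ⟨x₀, hx₀⟩ := hKint
  have hx₀K : x₀ ∈ K := interior_subset hx₀
  -- the center is in K
  have hcK : c ∈ K := by
    have h2 : (2:ℝ) • c - x₀ ∈ K := hc x₀ hx₀K
    have h3 := hKconv hx₀K h2 (by norm_num : (0:ℝ) ≤ 1/2) (by norm_num : (0:ℝ) ≤ 1/2)
      (by norm_num)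
    convert h3 using 1
    module
  -- R = max distance from c
  have hKcont : ContinuousOn (fun x : EuclideanSpace ℝ (Fin n) => ‖x - c‖) K :=
    Continuous.continuousOn (by fun_prop)
  obtain ⟨z, hzK, hz⟩ := hKc.exists_isMaxOn ⟨c, hcK⟩ hKcont
  set R := ‖z - c‖ with hRdef
  have hRmax : ∀ x ∈ K, ‖x - c‖ ≤ R := fun x hx => hz hx
  -- R > 0
  have hR0 : 0 < R := by
    rcases Metric.isOpen_iff.mp isOpen_interior x₀ hx₀ with ⟨r, hr, hball⟩
    set p : EuclideanSpace ℝ (Fin n) := x₀ + EuclideanSpace.single (⟨0, hn⟩ : Fin n) (r/2) with hpdef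
    have hdxp : dist p x₀ = r/2 := by
      rw [dist_eq_norm, hpdef, add_sub_cancel_left, EuclideanSpace.norm_single]
      rw [Real.norm_eq_abs, abs_of_pos (by linarith)]
    have hpK : p ∈ K := interior_subset (hball (by
      rw [Metric.mem_ball, hdxp]; linarith))
    by_contra h
    push_neg at h
    have hxc : ∀ x ∈ K, x = c := by
      intro x hx
      have h1 : ‖x - c‖ ≤ 0 := (hRmax x hx).trans h
      have h2 : ‖x - c‖ = 0 := le_antisymm h1 (norm_nonneg _)
      rwa [norm_eq_zero, sub_eq_zero] at h2
    have : p = x₀ := (hxc p hpK).trans (hxc x₀ hx₀K).symm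
    rw [this, dist_self] at hdxp
    linarith
  -- diam K = 2R
  have hdiam_le : Metric.diam K ≤ 2*R := by
    apply Metric.diam_le_of_forall_dist_le (by positivity)
    intro x hx y hy
    have h1 := hRmax x hx
    have h2 := hRmax y hy
    calc dist x y = ‖(x - c) - (y - c)‖ := by rw [dist_eq_norm]; congr 1; abel
      _ ≤ ‖x - c‖ + ‖y - c‖ := norm_sub_le _ _
      _ ≤ 2*R := by linarith
  have hdiam_ge : 2*R ≤ Metric.diam K := by
    have hz' : (2:ℝ) • c - z ∈ K := hc z hzK
    have hd : dist z ((2:ℝ) • c - z) = 2*R := by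
      rw [dist_eq_norm]
      have he : z - ((2:ℝ) • c - z) = (2:ℝ) • (z - c) := by module
      rw [he, norm_smul, hRdef]
      simp [Real.norm_eq_abs]
    linarith [Metric.dist_le_diam_of_mem hKc.isBounded hzK hz']
  have hdiamK : Metric.diam K = 2*R := le_antisymm hdiam_le hdiam_ge
  -- the vectors v i
  set v : Fin (n+1) → EuclideanSpace ℝ (Fin n) := fun i =>
    if h : (i:ℕ) < n then EuclideanSpace.single (⟨i, h⟩ : Fin n) 1
    else -(∑ j : Fin n, EuclideanSpace.single j (1:ℝ)) with hvdef
  have hvC : ∀ i, ‖v i‖ ≤ (n:ℝ)+1 := by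
    intro i
    rw [hvdef]
    dsimp only
    split_ifs with h
    · rw [EuclideanSpace.norm_single]
      simp only [norm_one]
      have : (0:ℝ) ≤ n := Nat.cast_nonneg n
      linarith
    · rw [norm_neg]
      calc ‖∑ j : Fin n, (EuclideanSpace.single j (1:ℝ) : EuclideanSpace ℝ (Fin n))‖
          ≤ ∑ j : Fin n, ‖(EuclideanSpace.single j (1:ℝ) : EuclideanSpace ℝ (Fin n))‖ :=
            norm_sum_le _ _
        _ = (n:ℝ) := by simp [EuclideanSpace.norm_single]
        _ ≤ (n:ℝ)+1 := by linarith
  -- positivity of max inner product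
  have hvpos : ∀ u : EuclideanSpace ℝ (Fin n), u ≠ 0 → ∃ i, 0 < ⟪v i, u⟫ := by
    intro u hu
    by_contra h
    push_neg at h
    have h1 : ∀ j : Fin n, u j ≤ 0 := by
      intro j
      have hj := h (Fin.castSucc j)
      rw [hvdef] at hj
      dsimp only at hj
      rw [dif_pos (by simpa using j.isLt)] at hj
      have : (⟨((Fin.castSucc j : Fin (n+1)) : ℕ), by simpa using j.isLt⟩ : Fin n) = j := by
        apply Fin.ext; simp
      rw [this, EuclideanSpace.inner_single_left] at hj
      simpa using hj
    have h2 : 0 ≤ ∑ j : Fin n, u j := by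
      have hl := h (Fin.last n)
      rw [hvdef] at hl
      dsimp only at hl
      rw [dif_neg (by simp)] at hl
      rw [inner_neg_left, sum_inner] at hl
      simp only [EuclideanSpace.inner_single_left, map_one, one_mul] at hl
      linarith
    have hsum0 : ∑ j : Fin n, u j = 0 :=
      le_antisymm (Finset.sum_nonpos fun j _ => h1 j) h2
    have hall : ∀ j : Fin n, u j = 0 :=
      fun j => (Finset.sum_eq_zero_iff_of_nonpos (fun i _ => h1 i)).mp hsum0 j (Finset.mem_univ j)
    apply hu
    ext j
    exact hall j
  -- δ via compactness of the sphere
  have hsne : (Metric.sphere (0:EuclideanSpace ℝ (Fin n)) 1).Nonempty := by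
    refine ⟨EuclideanSpace.single (⟨0, hn⟩ : Fin n) 1, ?_⟩
    rw [mem_sphere_zero_iff_norm, EuclideanSpace.norm_single]
    norm_num
  have hgcont : Continuous (fun u : EuclideanSpace ℝ (Fin n) => Finset.univ.sup' Finset.univ_nonempty
      (fun i => ⟪v i, u⟫)) :=
    Continuous.finset_sup'_apply Finset.univ_nonempty
      (fun i _ => continuous_const.inner continuous_id)
  obtain ⟨u₀, hu₀s, hu₀min⟩ := (isCompact_sphere (0:EuclideanSpace ℝ (Fin n)) 1).exists_isMinOn hsne
    hgcont.continuousOn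
  set δ := Finset.univ.sup' Finset.univ_nonempty (fun i => ⟪v i, u₀⟫) with hδdef
  have hδpos : 0 < δ := by
    have hu₀ : u₀ ≠ 0 := by
      have : ‖u₀‖ = 1 := mem_sphere_zero_iff_norm.mp hu₀s
      intro h0; rw [h0, norm_zero] at this; norm_num at this
    obtain ⟨i, hi⟩ := hvpos u₀ hu₀
    exact lt_of_lt_of_le hi (Finset.le_sup' (fun j => ⟪v j, u₀⟫) (Finset.mem_univ i))
  have hδle : ∀ u : EuclideanSpace ℝ (Fin n), ‖u‖ = 1 → ∃ i, δ ≤ ⟪v i, u⟫ := by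
    intro u hu
    have hmem : u ∈ Metric.sphere (0:EuclideanSpace ℝ (Fin n)) 1 := mem_sphere_zero_iff_norm.mpr hu
    have hge : δ ≤ Finset.univ.sup' Finset.univ_nonempty (fun i => ⟪v i, u⟫) :=
      hu₀min hmem
    obtain ⟨i, _, hi⟩ := Finset.exists_mem_eq_sup' Finset.univ_nonempty
      (fun i => ⟪v i, u⟫)
    exact ⟨i, by rw [← hi]; exact hge⟩
  clear_value v δ
  -- the pieces
  set X : Fin (n+1) → Set (EuclideanSpace ℝ (Fin n)) := fun i => {x | x ∈ K ∧ δ * ‖x - c‖ ≤ ⟪v i, x - c⟫} with hXdef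
  -- covering
  have hcover : ∀ x ∈ K, ∃ i, δ * ‖x - c‖ ≤ ⟪v i, x - c⟫ := by
    intro x hx
    rcases eq_or_ne x c with rfl | hxc
    · exact ⟨0, by simp⟩
    · have hnorm : (0:ℝ) < ‖x - c‖ := by
        rw [norm_pos_iff, sub_ne_zero]; exact hxc
      set u : EuclideanSpace ℝ (Fin n) := ‖x - c‖⁻¹ • (x - c) with hudef
      have hu : ‖u‖ = 1 := by
        rw [hudef, norm_smul, norm_inv, norm_norm]
        field_simp
      obtain ⟨i, hi⟩ := hδle u hu
      refine ⟨i, ?_⟩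
      rw [hudef, real_inner_smul_right] at hi
      calc δ * ‖x - c‖ ≤ (‖x - c‖⁻¹ * ⟪v i, x - c⟫) * ‖x - c‖ := by nlinarith
        _ = ⟪v i, x - c⟫ := by field_simp
  -- β
  set β : ℝ := min ((δ/((n:ℝ)+1))^2) 1 with hβdef
  have hC : (0:ℝ) < (n:ℝ)+1 := by positivity
  have hβpos : 0 < β := lt_min (by positivity) one_pos
  have hβ1 : β ≤ 1 := min_le_right _ _
  have hβle : β ≤ (δ/((n:ℝ)+1))^2 := min_le_left _ _
  have hδ0 : (0:ℝ) ≤ δ := hδpos.le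
  clear_value β
  -- diameter bound for pieces
  set D := Real.sqrt ((4-2*β)*R^2) with hDdef
  have hkey : ∀ i, ∀ x ∈ X i, ∀ y ∈ X i, ‖(x - c) - (y - c)‖^2 ≤ (4-2*β)*R^2 := by
    intro i x hx y hy
    obtain ⟨hxK, hxi⟩ := hx
    obtain ⟨hyK, hyi⟩ := hy
    clear hXdef hvdef hcover hδle hvpos hδdef hgcont hu₀min hu₀s hsne hc hz hKcont hdiamK
      hdiam_le hdiam_ge
    set p := x - c with hpdef
    set q := y - c with hqdef
    have hs : ‖p‖ ≤ R := hRmax x hxK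
    have ht : ‖q‖ ≤ R := hRmax y hyK
    have hsp : (0:ℝ) ≤ ‖p‖ := norm_nonneg _
    have htp : (0:ℝ) ≤ ‖q‖ := norm_nonneg _
    have h1 : δ * (‖p‖ + ‖q‖) ≤ ⟪v i, p + q⟫ := by
      rw [inner_add_right]
      nlinarith [hxi, hyi]
    have h2 : ⟪v i, p + q⟫ ≤ ((n:ℝ)+1) * ‖p + q‖ := by
      calc ⟪v i, p + q⟫ ≤ ‖v i‖ * ‖p + q‖ := real_inner_le_norm _ _
        _ ≤ ((n:ℝ)+1) * ‖p + q‖ := mul_le_mul_of_nonneg_right (hvC i) (norm_nonneg _)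
    have h3 : δ * (‖p‖ + ‖q‖) ≤ ((n:ℝ)+1) * ‖p + q‖ := h1.trans h2
    have h4 : β * (‖p‖ + ‖q‖)^2 ≤ ‖p + q‖^2 := by
      have hst : (0:ℝ) ≤ ‖p‖ + ‖q‖ := by linarith
      have hsq : (δ * (‖p‖ + ‖q‖))^2 ≤ (((n:ℝ)+1) * ‖p + q‖)^2 :=
        pow_le_pow_left₀ (mul_nonneg hδ0 hst) h3 2
      have h5' : (δ/((n:ℝ)+1))^2 * (‖p‖ + ‖q‖)^2 ≤ ‖p + q‖^2 := by
        rw [div_pow, div_mul_eq_mul_div, div_le_iff₀ (by positivity)]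
        calc δ^2 * (‖p‖+‖q‖)^2 = (δ*(‖p‖+‖q‖))^2 := by ring
          _ ≤ (((n:ℝ)+1)*‖p+q‖)^2 := hsq
          _ = ‖p+q‖^2 * ((n:ℝ)+1)^2 := by ring
      calc β * (‖p‖ + ‖q‖)^2 ≤ (δ/((n:ℝ)+1))^2 * (‖p‖ + ‖q‖)^2 :=
            mul_le_mul_of_nonneg_right hβle (by positivity)
        _ ≤ ‖p + q‖^2 := h5'
    have hpar : ‖p + q‖*‖p + q‖ + ‖p - q‖*‖p - q‖ = 2*(‖p‖*‖p‖ + ‖q‖*‖q‖) :=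
      by simpa only [sq] using parallelogram_law_with_norm ℝ p q
    have habs : |‖p‖ - ‖q‖| ≤ ‖p + q‖ := by
      have h := abs_norm_sub_norm_le p (-q)
      rwa [sub_neg_eq_add, norm_neg] at h
    have h6 : (‖p‖ - ‖q‖)^2 ≤ ‖p + q‖^2 := by
      have := sq_abs (‖p‖ - ‖q‖)
      nlinarith [norm_nonneg (p+q), abs_nonneg (‖p‖ - ‖q‖)]
    have h7 : ‖p‖^2 ≤ R^2 := by nlinarith
    have h8 : ‖q‖^2 ≤ R^2 := by nlinarith
    have h9 : ‖p‖*‖q‖ ≤ R^2 := by nlinarith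
    have ha : (0:ℝ) ≤ (3-β)/2 := by linarith
    have hb : (0:ℝ) ≤ 1-β := by linarith
    nlinarith [mul_nonneg ha (sub_nonneg.mpr h7), mul_nonneg ha (sub_nonneg.mpr h8),
      mul_nonneg hb (sub_nonneg.mpr h9), hpar, h4, h6]
  have hDnn : 0 ≤ D := Real.sqrt_nonneg _
  have hdiamX : ∀ i, Metric.diam (X i) ≤ D := by
    intro i
    apply Metric.diam_le_of_forall_dist_le hDnn
    intro x hx y hy
    rw [dist_eq_norm, show x - y = (x - c) - (y - c) by abel]
    rw [hDdef, Real.le_sqrt (norm_nonneg _) (by nlinarith : (0:ℝ) ≤ (4-2*β)*R^2)]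
    exact hkey i x hx y hy
  have hDlt : D < 2*R := by
    rw [hDdef, Real.sqrt_lt' (by linarith)]
    nlinarith [mul_pos hβpos (mul_pos hR0 hR0)]
  refine ⟨X, ?_, ?_⟩
  · ext x
    simp only [Set.mem_iUnion]
    constructor
    · intro hx
      obtain ⟨i, hi⟩ := hcover x hx
      exact ⟨i, hx, hi⟩
    · rintro ⟨i, hi⟩
      exact hi.1
  · intro i
    rw [hdiamK]
    exact lt_of_le_of_lt (hdiamX i) hDlt
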